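/- Assume V⁺ admits a monomial parametrization (with data M ∈ ℤ^{n×d}, K ⊆ ℝ_{>0}^r, γ : K → ℝ^d). Let q < n and let A ∈ ℚ^{q×n} be a matrix of maximal rank q with AM = 0. Then for every (k,x) ∈ ℝ_{>0}^r × ℝ_{>0}^n: (i) for every ξ ∈ ℝ_{>0}^q, (k,x) ∈ V⁺ if and only if (k, x⋆ξ^A) ∈ V⁺; and (ii) for every κ ∈ ℝ^q, (k,x) ∈ V⁺ if and only if (k, x⋆(e^κ)^A) ∈ V⁺, where e^κ is taken componentwise. -/
import Mathlib


open Matrix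

noncomputable section

/-- The monomial map φ: `phi Y x j = ∏ i, x i ^ Y i j`. -/
def phi {n r : ℕ} (Y : Matrix (Fin n) (Fin r) ℕ) (x : Fin n → ℝ) : Fin r → ℝ :=
  fun j => ∏ i, x i ^ Y i j

/-- The positive steady state variety V⁺. -/
def Vplus {n r : ℕ} (Y : Matrix (Fin n) (Fin r) ℕ) (S : Matrix (Fin n) (Fin r) ℝ) :
    Set ((Fin r → ℝ) × (Fin n → ℝ)) :=
  {p | (∀ j, 0 < p.1 j) ∧ (∀ i, 0 < p.2 i) ∧
    S.mulVec (fun j => p.1 j * phi Y p.2 j) = 0}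

/-- `E` is a cone generator matrix for `S`:
`E` is nonnegative and `ker S ∩ ℝ_{≥0}^r = {Eλ : λ ≥ 0}`. -/
def IsConeGenMatrix {n r d : ℕ} (S : Matrix (Fin n) (Fin r) ℝ)
    (E : Matrix (Fin r) (Fin d) ℝ) : Prop :=
  (∀ j l, 0 ≤ E j l) ∧
  {v : Fin r → ℝ | S.mulVec v = 0 ∧ ∀ j, 0 ≤ v j} =
    {v : Fin r → ℝ | ∃ lam : Fin d → ℝ, (∀ l, 0 ≤ lam l) ∧ v = E.mulVec lam}

/-- The coefficient cone Λ(E). -/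
def Lambda {r d : ℕ} (E : Matrix (Fin r) (Fin d) ℝ) : Set (Fin d → ℝ) :=
  {lam | (∀ l, 0 ≤ lam l) ∧ ∀ j, 0 < E.mulVec lam j}

/-- `ξ^B`: for a rational `q × m` matrix `B`, `(ξ^B) j = ∏ i, ξ i ^ (B i j)` (real powers). -/
def vecPow {q m : ℕ} (ξ : Fin q → ℝ) (B : Matrix (Fin q) (Fin m) ℚ) : Fin m → ℝ :=
  fun j => ∏ i, ξ i ^ ((B i j : ℝ))

/-- V⁺ admits a monomial parametrization with exponent matrix `A` (data `p`, `A`, `K`, `ψ`). -/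
def IsMonomialParamExp {n r : ℕ} (Y : Matrix (Fin n) (Fin r) ℕ)
    (S : Matrix (Fin n) (Fin r) ℝ) (p : ℕ) (A : Matrix (Fin (n - p)) (Fin n) ℚ)
    (K : Set (Fin r → ℝ)) (ψ : (Fin r → ℝ) → (Fin n → ℝ)) : Prop :=
  p < n ∧ A.rank = n - p ∧ (∀ k ∈ K, ∀ j, 0 < k j) ∧ (∀ k ∈ K, ∀ i, 0 < ψ k i) ∧
  ∀ k x, (∀ j : Fin r, 0 < k j) → (∀ i : Fin n, 0 < x i) →
    ((k, x) ∈ Vplus Y S ↔ k ∈ K ∧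
      ∃ ξ : Fin (n - p) → ℝ, (∀ l, 0 < ξ l) ∧ x = fun i => ψ k i * vecPow ξ A i)

/-- `Z` is a conservation matrix for `S` (with `s = rank S`):
its rows form a basis of the left kernel of `S`. -/
def IsConservationMatrix {n r : ℕ} (S : Matrix (Fin n) (Fin r) ℝ) (s : ℕ)
    (Z : Matrix (Fin (n - s)) (Fin n) ℝ) : Prop :=
  S.rank = s ∧ s < n ∧ LinearIndependent ℝ (fun i => Z i) ∧
    Submodule.span ℝ (Set.range (fun i => Z i)) = LinearMap.ker S.vecMulLinear

/-- `im₊(Z) = {Zx : x ≥ 0}`. -/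
def imPos {m n : ℕ} (Z : Matrix (Fin m) (Fin n) ℝ) : Set (Fin m → ℝ) :=
  {c | ∃ x : Fin n → ℝ, (∀ i, 0 ≤ x i) ∧ c = Z.mulVec x}

/-- The real row space of a rational matrix. -/
def rowSpace {q m : ℕ} (A : Matrix (Fin q) (Fin m) ℚ) : Submodule ℝ (Fin m → ℝ) :=
  Submodule.span ℝ (Set.range (fun l => fun i => ((A l i : ℝ))))

/-- The column space (image) of `S`. -/
def colSpace {n r : ℕ} (S : Matrix (Fin n) (Fin r) ℝ) : Submodule ℝ (Fin n → ℝ) :=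
  LinearMap.range S.mulVecLin

/-- Componentwise sign of a vector. -/
def signVec {m : ℕ} (v : Fin m → ℝ) : Fin m → ℝ := fun i => Real.sign (v i)

/-- V⁺ admits a monomial parametrization (data `M`, `K`, `γ`), with `p = rank M < n`. -/
def IsMonomialParamM {n r d : ℕ} (Y : Matrix (Fin n) (Fin r) ℕ)
    (S : Matrix (Fin n) (Fin r) ℝ) (M : Matrix (Fin n) (Fin d) ℤ) (p : ℕ)
    (K : Set (Fin r → ℝ)) (γ : (Fin r → ℝ) → Fin d → ℝ) : Prop :=
  p < n ∧ (M.map (Int.cast : ℤ → ℚ)).rank = p ∧ (∀ k ∈ K, ∀ j, 0 < k j) ∧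
  ∀ k x, (∀ j : Fin r, 0 < k j) → (∀ i : Fin n, 0 < x i) →
    ((k, x) ∈ Vplus Y S ↔ k ∈ K ∧ ∀ j, (∏ i, x i ^ M i j) = γ k j)

/-- if AM = 0 with A of maximal rank q < n, then the fibers of V⁺ over k are
invariant under scaling by ξ^A (equivalently (e^κ)^A). -/

lemma vecPow_pos {q m : ℕ} {ξ : Fin q → ℝ} (hξ : ∀ l, 0 < ξ l)
    (B : Matrix (Fin q) (Fin m) ℚ) (j : Fin m) : 0 < vecPow ξ B j :=
  Finset.prod_pos fun i _ => Real.rpow_pos_of_pos (hξ i) _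

lemma prod_scaled {n d q : ℕ} (M : Matrix (Fin n) (Fin d) ℤ) (A : Matrix (Fin q) (Fin n) ℚ)
    (hAM : A * (M.map (Int.cast : ℤ → ℚ)) = 0) (x : Fin n → ℝ) (ξ : Fin q → ℝ)
    (hξ : ∀ l, 0 < ξ l) (j : Fin d) :
    (∏ i, (x i * vecPow ξ A i) ^ M i j) = ∏ i, x i ^ M i j := by
  have h1 : ∀ i : Fin n, (x i * vecPow ξ A i) ^ M i j
      = x i ^ M i j * (vecPow ξ A i) ^ M i j := fun i => mul_zpow _ _ _
  simp_rw [h1, Finset.prod_mul_distrib]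
  have h2 : (∏ i, (vecPow ξ A i) ^ M i j) = 1 := by
    have key : ∀ i : Fin n, (vecPow ξ A i) ^ M i j
        = ∏ l, ξ l ^ ((A l i : ℝ) * (M i j : ℝ)) := by
      intro i
      rw [← Real.rpow_intCast (vecPow ξ A i) (M i j)]
      unfold vecPow
      rw [← Real.finset_prod_rpow _ _ (fun l _ => (Real.rpow_pos_of_pos (hξ l) _).le)]
      refine Finset.prod_congr rfl fun l _ => ?_
      rw [← Real.rpow_mul (hξ l).le]
    simp_rw [key]
    rw [Finset.prod_comm]
    have h3 : ∀ l : Fin q, (∏ i, ξ l ^ ((A l i : ℝ) * (M i j : ℝ)))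
        = ξ l ^ (∑ i, (A l i : ℝ) * (M i j : ℝ)) := fun l =>
      (Real.rpow_sum_of_pos (hξ l) _ _).symm
    simp_rw [h3]
    have h4 : ∀ l : Fin q, (∑ i, (A l i : ℝ) * (M i j : ℝ)) = 0 := by
      intro l
      have := congrFun (congrFun hAM l) j
      simp only [Matrix.mul_apply, Matrix.map_apply, Matrix.zero_apply] at this
      have : ((∑ i, A l i * (M i j : ℚ) : ℚ) : ℝ) = 0 := by rw [this]; norm_num
      push_cast at this
      convert this using 2
    simp_rw [h4, Real.rpow_zero]
    simp
  rw [h2, mul_one]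

theorem mem_Vplus_iff_hadamard_vecPow {n r d q : ℕ} (hn : 1 ≤ n) (hr : 1 ≤ r)
    (Y : Matrix (Fin n) (Fin r) ℕ) (S : Matrix (Fin n) (Fin r) ℝ)
    (M : Matrix (Fin n) (Fin d) ℤ) (p : ℕ) (K : Set (Fin r → ℝ))
    (γ : (Fin r → ℝ) → Fin d → ℝ) (hparam : IsMonomialParamM Y S M p K γ)
    (hq : q < n) (A : Matrix (Fin q) (Fin n) ℚ) (hA : A.rank = q)
    (hAM : A * (M.map (Int.cast : ℤ → ℚ)) = 0) :
    ∀ k x, (∀ j : Fin r, 0 < k j) → (∀ i : Fin n, 0 < x i) →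
      (∀ ξ : Fin q → ℝ, (∀ l, 0 < ξ l) →
        ((k, x) ∈ Vplus Y S ↔ (k, fun i => x i * vecPow ξ A i) ∈ Vplus Y S)) ∧
      (∀ κ : Fin q → ℝ,
        ((k, x) ∈ Vplus Y S ↔
          (k, fun i => x i * vecPow (fun l => Real.exp (κ l)) A i) ∈ Vplus Y S)) := by
  obtain ⟨hpn, hrk, hK, hiff⟩ := hparam
  intro k x hk hx
  have main : ∀ ξ : Fin q → ℝ, (∀ l, 0 < ξ l) →
      ((k, x) ∈ Vplus Y S ↔ (k, fun i => x i * vecPow ξ A i) ∈ Vplus Y S) := by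
    intro ξ hξ
    have hx' : ∀ i, 0 < x i * vecPow ξ A i :=
      fun i => mul_pos (hx i) (vecPow_pos hξ A i)
    rw [hiff k x hk hx, hiff k _ hk hx']
    constructor
    · rintro ⟨hkK, h⟩
      exact ⟨hkK, fun j => by rw [prod_scaled M A hAM x ξ hξ j]; exact h j⟩
    · rintro ⟨hkK, h⟩
      exact ⟨hkK, fun j => by rw [← prod_scaled M A hAM x ξ hξ j]; exact h j⟩
  exact ⟨main, fun κ => main _ (fun l => Real.exp_pos _)⟩
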